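/- Let I = [0,a], let f : I → ℝ be superterzatic, let p_{ij} > 0 and r_{ij} > 0 (i = 1,…,k, j = 1,…,n_i) with ∑_{j=1}^{n_i} p_{ij} = ∑_{j=1}^{n_i} r_{ij} = 1 for each i, let x_{ij} ∈ I, and let q_i > 0 with ∑_{i=1}^k q_i = 1. Set m = min over all (j_1,…,j_k) of (p_{1j_1}⋯p_{kj_k})/(r_{1j_1}⋯r_{kj_k}), and x̄ = ∑_{i=1}^k q_i ∑_{j=1}^{n_i} p_{ij} x_{ij}. Then J_k(f, p_1,…,p_k, q, x_1,…,x_k) − m·J_k(f, r_1,…,r_k, q, x_1,…,x_k) ≥ ∑_{j_1,…,j_k} (p_{1j_1}⋯p_{kj_k} − m r_{1j_1}⋯r_{kj_k}) (∑_i q_i x_{ij_i}) [ (∑_i q_i x_{ij_i} − x̄) C(x̄) + f(|∑_i q_i x_{ij_i} − x̄|)/|∑_i q_i x_{ij_i} − x̄| ] + m (∑_i q_i ∑_j r_{ij} x_{ij}) [ (∑_i q_i ∑_j (r_{ij} − p_{ij}) x_{ij}) C(x̄) + f(|∑_i q_i ∑_j (r_{ij} − p_{ij}) x_{ij}|)/|∑_i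 q_i ∑_j (r_{ij} − p_{ij}) x_{ij}| ], where C(x̄) is the constant provided by superterzaticity of f at x̄. -/

import Mathlib

open Finset

private lemma sum_prod_one' {k : ℕ} {n : Fin k → ℕ} (w : ∀ i : Fin k, Fin (n i) → ℝ) :
    ∑ j : ∀ l, Fin (n l), ∏ l, w l (j l) = ∏ l, ∑ t, w l t := by
  classical
  rw [Finset.prod_univ_sum (fun _ => Finset.univ) w, Fintype.piFinset_univ]

private lemma sum_prod_eval' {k : ℕ} {n : Fin k → ℕ} (w : ∀ i : Fin k, Fin (n i) → ℝ)
    (hw : ∀ i, ∑ t, w i t = 1) (i : Fin k) (g : Fin (n i) → ℝ) :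
    ∑ j : ∀ l, Fin (n l), (∏ l, w l (j l)) * g (j i) = ∑ t, w i t * g t := by
  classical
  set U : ∀ l : Fin k, Fin (n l) → ℝ := Function.update w i (fun t => w i t * g t) with hU
  have h1 : ∀ j : ∀ l, Fin (n l), ∏ l, U l (j l) = (∏ l, w l (j l)) * g (j i) := by
    intro j
    rw [← Finset.mul_prod_erase Finset.univ (fun l => U l (j l)) (Finset.mem_univ i),
        ← Finset.mul_prod_erase Finset.univ (fun l => w l (j l)) (Finset.mem_univ i)]
    have h2 : ∀ l ∈ Finset.univ.erase i, U l (j l) = w l (j l) := by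
      intro l hl
      rw [hU, Function.update_of_ne (Finset.mem_erase.mp hl).1]
    rw [Finset.prod_congr rfl h2]
    simp [hU]
    ring
  calc ∑ j : ∀ l, Fin (n l), (∏ l, w l (j l)) * g (j i)
      = ∑ j : ∀ l, Fin (n l), ∏ l, U l (j l) :=
        (Finset.sum_congr rfl fun j _ => h1 j).symm
    _ = ∏ l, ∑ t, U l t := sum_prod_one' U
    _ = ∑ t, w i t * g t := by
        rw [← Finset.mul_prod_erase Finset.univ (fun l => ∑ t, U l t) (Finset.mem_univ i)]
        have h3 : ∀ l ∈ Finset.univ.erase i, ∑ t, U l t = 1 := by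
          intro l hl
          rw [hU]
          rw [show (∑ t, Function.update w i (fun t => w i t * g t) l t) = ∑ t, w l t from
            Finset.sum_congr rfl fun t _ => by
              rw [Function.update_of_ne (Finset.mem_erase.mp hl).1]]
          exact hw l
        rw [Finset.prod_congr rfl h3, Finset.prod_const_one, mul_one]
        simp [hU]

private lemma combo_mem' {a : ℝ} {ι : Type*} {s : Finset ι} {w z : ι → ℝ}
    (hw : ∀ i ∈ s, 0 ≤ w i) (hw1 : ∑ i ∈ s, w i = 1)
    (hz : ∀ i ∈ s, z i ∈ Set.Icc (0:ℝ) a) : (∑ i ∈ s, w i * z i) ∈ Set.Icc (0:ℝ) a := by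
  simpa using (convex_Icc (0:ℝ) a).sum_mem hw hw1 hz

/-- `SuperterzaticWith a f C` : the function `f` is superterzatic on `I = [0,a]`,
with `C x̄` the constant provided at each point `x̄ ∈ I`. -/
def SuperterzaticWith (a : ℝ) (f : ℝ → ℝ) (C : ℝ → ℝ) : Prop :=
  ∀ xbar ∈ Set.Icc (0 : ℝ) a, ∀ (n : ℕ) (x p : Fin n → ℝ),
    (∀ i, x i ∈ Set.Icc (0 : ℝ) a) → (∀ i, 0 ≤ p i) → (∑ i, p i = 1) →
    (∑ i, p i * x i = xbar) →
    ∑ i, p i * f (x i) - f xbar ≥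
      ∑ i, p i * x i * ((x i - xbar) * C xbar + f |x i - xbar| / |x i - xbar|)

/-- The generalized Jensen functional `J_k`. -/
noncomputable def genJensen (f : ℝ → ℝ) (k : ℕ) (n : Fin k → ℕ)
    (p x : ∀ i : Fin k, Fin (n i) → ℝ) (q : Fin k → ℝ) : ℝ :=
  ∑ j : ∀ i : Fin k, Fin (n i), (∏ i, p i (j i)) * f (∑ i, q i * x i (j i)) -
    f (∑ i, q i * ∑ j, p i j * x i j)

/-- Theorem 6, first inequality. -/
theorem genJensen_sub_min_smul_ge (a : ℝ) (f C : ℝ → ℝ)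
    (hf : SuperterzaticWith a f C)
    (k : ℕ) (n : Fin k → ℕ) (p r x : ∀ i : Fin k, Fin (n i) → ℝ) (q : Fin k → ℝ)
    (hp : ∀ i j, 0 < p i j) (hpsum : ∀ i, ∑ j, p i j = 1)
    (hr : ∀ i j, 0 < r i j) (hrsum : ∀ i, ∑ j, r i j = 1)
    (hx : ∀ i j, x i j ∈ Set.Icc (0 : ℝ) a)
    (hq : ∀ i, 0 < q i) (hqsum : ∑ i, q i = 1)
    (m : ℝ)
    (hm : IsLeast {v : ℝ | ∃ j : ∀ i : Fin k, Fin (n i),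
      v = (∏ i, p i (j i)) / (∏ i, r i (j i))} m)
    (xbar : ℝ) (hxbar : xbar = ∑ i, q i * ∑ j, p i j * x i j) :
    genJensen f k n p x q - m * genJensen f k n r x q ≥
      (∑ j : ∀ i : Fin k, Fin (n i),
        ((∏ i, p i (j i)) - m * ∏ i, r i (j i)) * (∑ i, q i * x i (j i)) *
          ((∑ i, q i * x i (j i) - xbar) * C xbar +
            f |∑ i, q i * x i (j i) - xbar| / |∑ i, q i * x i (j i) - xbar|))
      + m * (∑ i, q i * ∑ j, r i j * x i j) *
          ((∑ i, q i * ∑ j, (r i j - p i j) * x i j) * C xbar +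
            f |∑ i, q i * ∑ j, (r i j - p i j) * x i j| /
              |∑ i, q i * ∑ j, (r i j - p i j) * x i j|) := by
  classical
  obtain ⟨hmmem, hmle⟩ := hm
  obtain ⟨j₀, hj₀⟩ := hmmem
  have hrprod : ∀ j : ∀ i : Fin k, Fin (n i), 0 < ∏ i, r i (j i) :=
    fun j => Finset.prod_pos fun i _ => hr i (j i)
  have hpprod : ∀ j : ∀ i : Fin k, Fin (n i), 0 < ∏ i, p i (j i) :=
    fun j => Finset.prod_pos fun i _ => hp i (j i)
  have hm0 : 0 ≤ m := by
    rw [hj₀]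
    exact le_of_lt (div_pos (hpprod j₀) (hrprod j₀))
  have hw0 : ∀ j : ∀ i : Fin k, Fin (n i), 0 ≤ (∏ i, p i (j i)) - m * ∏ i, r i (j i) := by
    intro j
    have h := hmle ⟨j, rfl⟩
    rw [le_div_iff₀ (hrprod j)] at h
    linarith
  -- basic sum identities
  have hPsum : ∑ j : ∀ i : Fin k, Fin (n i), ∏ i, p i (j i) = 1 := by
    rw [sum_prod_one' p]
    simp [hpsum]
  have hRsum : ∑ j : ∀ i : Fin k, Fin (n i), ∏ i, r i (j i) = 1 := by
    rw [sum_prod_one' r]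
    simp [hrsum]
  have hcomb : ∀ (w : ∀ i : Fin k, Fin (n i) → ℝ), (∀ i, ∑ t, w i t = 1) →
      ∑ j : ∀ i : Fin k, Fin (n i), (∏ i, w i (j i)) * (∑ i, q i * x i (j i))
        = ∑ i, q i * ∑ t, w i t * x i t := by
    intro w hw
    calc ∑ j : ∀ i : Fin k, Fin (n i), (∏ l, w l (j l)) * (∑ i, q i * x i (j i))
        = ∑ j : ∀ i : Fin k, Fin (n i), ∑ i, q i * ((∏ l, w l (j l)) * x i (j i)) := by
          refine Finset.sum_congr rfl fun j _ => ?_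
          rw [Finset.mul_sum]
          exact Finset.sum_congr rfl fun i _ => by ring
      _ = ∑ i, ∑ j : ∀ i : Fin k, Fin (n i), q i * ((∏ l, w l (j l)) * x i (j i)) :=
          Finset.sum_comm
      _ = ∑ i, q i * ∑ j : ∀ i : Fin k, Fin (n i), (∏ l, w l (j l)) * x i (j i) := by
          exact Finset.sum_congr rfl fun i _ => by rw [Finset.mul_sum]
      _ = ∑ i, q i * ∑ t, w i t * x i t := by
          refine Finset.sum_congr rfl fun i _ => ?_
          rw [sum_prod_eval' w hw i (x i)]
  have hPx := hcomb p hpsum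
  have hRx := hcomb r hrsum
  -- memberships
  have hXmem : ∀ j : ∀ i : Fin k, Fin (n i), (∑ i, q i * x i (j i)) ∈ Set.Icc (0:ℝ) a :=
    fun j => combo_mem' (fun i _ => (hq i).le) hqsum (fun i _ => hx i (j i))
  have hymem : (∑ i, q i * ∑ t, r i t * x i t) ∈ Set.Icc (0:ℝ) a :=
    combo_mem' (fun i _ => (hq i).le) hqsum
      (fun i _ => combo_mem' (fun t _ => (hr i t).le) (hrsum i) (fun t _ => hx i t))
  have hxbarmem : xbar ∈ Set.Icc (0:ℝ) a := by
    rw [hxbar]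
    exact combo_mem' (fun i _ => (hq i).le) hqsum
      (fun i _ => combo_mem' (fun t _ => (hp i t).le) (hpsum i) (fun t _ => hx i t))
  set y : ℝ := ∑ i, q i * ∑ t, r i t * x i t with hy
  -- the split of the big (N+1)-point sum
  set N : ℕ := Fintype.card (∀ i : Fin k, Fin (n i)) with hN
  set e : (∀ i : Fin k, Fin (n i)) ≃ Fin N := Fintype.equivFin _ with he
  set x' : Fin (N+1) → ℝ :=
    Fin.snoc (fun t => ∑ i, q i * x i (e.symm t i)) y with hx'
  set p' : Fin (N+1) → ℝ :=
    Fin.snoc (fun t => (∏ i, p i (e.symm t i)) - m * ∏ i, r i (e.symm t i)) m with hp'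
  have hsplit : ∀ H : ℝ → ℝ, ∑ i2, p' i2 * H (x' i2)
      = (∑ j : ∀ i : Fin k, Fin (n i),
          ((∏ i, p i (j i)) - m * ∏ i, r i (j i)) * H (∑ i, q i * x i (j i))) + m * H y := by
    intro H
    rw [Fin.sum_univ_castSucc]
    congr 1
    · rw [← Equiv.sum_comp e.symm
        (fun j => ((∏ i, p i (j i)) - m * ∏ i, r i (j i)) * H (∑ i, q i * x i (j i)))]
      refine Finset.sum_congr rfl fun t _ => ?_
      simp only [hx', hp', Fin.snoc_castSucc]
    · simp only [hx', hp', Fin.snoc_last]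
  have hp'0 : ∀ i2, 0 ≤ p' i2 := by
    refine Fin.lastCases ?_ ?_
    · simp only [hp', Fin.snoc_last]; exact hm0
    · intro t; simp only [hp', Fin.snoc_castSucc]; exact hw0 _
  have hx'mem : ∀ i2, x' i2 ∈ Set.Icc (0:ℝ) a := by
    refine Fin.lastCases ?_ ?_
    · simp only [hx', Fin.snoc_last]; exact hymem
    · intro t; simp only [hx', Fin.snoc_castSucc]; exact hXmem _
  have hsub : ∀ G : (∀ i : Fin k, Fin (n i)) → ℝ,
      ∑ j : ∀ i : Fin k, Fin (n i), ((∏ i, p i (j i)) - m * ∏ i, r i (j i)) * G j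
        = (∑ j : ∀ i : Fin k, Fin (n i), (∏ i, p i (j i)) * G j)
          - m * ∑ j : ∀ i : Fin k, Fin (n i), (∏ i, r i (j i)) * G j := by
    intro G
    rw [Finset.mul_sum, ← Finset.sum_sub_distrib]
    exact Finset.sum_congr rfl fun j _ => by ring
  have hWsum : ∑ j : ∀ i : Fin k, Fin (n i), ((∏ i, p i (j i)) - m * ∏ i, r i (j i)) = 1 - m := by
    have h := hsub (fun _ => (1:ℝ))
    simp only [mul_one] at h
    rw [h, hPsum, hRsum]
    ring
  have hsum1 : ∑ i2, p' i2 = 1 := by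
    have h := hsplit (fun _ => (1:ℝ))
    simp only [mul_one] at h
    rw [h, hWsum]
    ring
  have hsum2 : ∑ i2, p' i2 * x' i2 = xbar := by
    have h : ∑ i2, p' i2 * x' i2
        = (∑ j : ∀ i : Fin k, Fin (n i),
            ((∏ i, p i (j i)) - m * ∏ i, r i (j i)) * (∑ i, q i * x i (j i))) + m * y :=
      hsplit id
    have h2 := hsub (fun j => ∑ i, q i * x i (j i))
    rw [h, h2, hPx, hRx, ← hxbar]
    ring
  have key := hf xbar hxbarmem (N+1) x' p' hx'mem hp'0 hsum1 hsum2
  have keyL : ∑ i2, p' i2 * f (x' i2)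
      = (∑ j : ∀ i : Fin k, Fin (n i),
          ((∏ i, p i (j i)) - m * ∏ i, r i (j i)) * f (∑ i, q i * x i (j i))) + m * f y :=
    hsplit f
  have keyR : ∑ i2, p' i2 * (x' i2 * ((x' i2 - xbar) * C xbar + f |x' i2 - xbar| / |x' i2 - xbar|))
      = (∑ j : ∀ i : Fin k, Fin (n i),
          ((∏ i, p i (j i)) - m * ∏ i, r i (j i)) *
            ((∑ i, q i * x i (j i)) * ((∑ i, q i * x i (j i) - xbar) * C xbar +
              f |∑ i, q i * x i (j i) - xbar| / |∑ i, q i * x i (j i) - xbar|)))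
        + m * (y * ((y - xbar) * C xbar + f |y - xbar| / |y - xbar|)) :=
    hsplit (fun z => z * ((z - xbar) * C xbar + f |z - xbar| / |z - xbar|))
  have keyR' : ∑ i2, p' i2 * x' i2 * ((x' i2 - xbar) * C xbar + f |x' i2 - xbar| / |x' i2 - xbar|)
      = ∑ i2, p' i2 * (x' i2 * ((x' i2 - xbar) * C xbar + f |x' i2 - xbar| / |x' i2 - xbar|)) :=
    Finset.sum_congr rfl fun _ _ => mul_assoc _ _ _
  rw [keyL, keyR', keyR] at key
  -- now rewrite the goal
  have hyx : ∑ i, q i * ∑ t, (r i t - p i t) * x i t = y - xbar := by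
    have h1 : ∀ i, ∑ t, (r i t - p i t) * x i t
        = (∑ t, r i t * x i t) - ∑ t, p i t * x i t := fun i => by
      rw [← Finset.sum_sub_distrib]
      exact Finset.sum_congr rfl fun t _ => by ring
    calc ∑ i, q i * ∑ t, (r i t - p i t) * x i t
        = ∑ i, (q i * ∑ t, r i t * x i t - q i * ∑ t, p i t * x i t) := by
          refine Finset.sum_congr rfl fun i _ => ?_
          rw [h1 i, mul_sub]
      _ = y - xbar := by rw [Finset.sum_sub_distrib, ← hxbar]
  rw [hyx]
  have gP : genJensen f k n p x q
      = (∑ j : ∀ i : Fin k, Fin (n i), (∏ i, p i (j i)) * f (∑ i, q i * x i (j i))) - f xbar := by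
    simp only [genJensen]
    rw [← hxbar]
  have gR : genJensen f k n r x q
      = (∑ j : ∀ i : Fin k, Fin (n i), (∏ i, r i (j i)) * f (∑ i, q i * x i (j i))) - f y := by
    simp only [genJensen]
    rw [← hy]
  rw [gP, gR]
  have hsubf := hsub (fun j => f (∑ i, q i * x i (j i)))
  have hgoalsum : ∑ j : ∀ i : Fin k, Fin (n i),
      ((∏ i, p i (j i)) - m * ∏ i, r i (j i)) * (∑ i, q i * x i (j i)) *
        ((∑ i, q i * x i (j i) - xbar) * C xbar +
          f |∑ i, q i * x i (j i) - xbar| / |∑ i, q i * x i (j i) - xbar|)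
      = ∑ j : ∀ i : Fin k, Fin (n i),
      ((∏ i, p i (j i)) - m * ∏ i, r i (j i)) * ((∑ i, q i * x i (j i)) *
        ((∑ i, q i * x i (j i) - xbar) * C xbar +
          f |∑ i, q i * x i (j i) - xbar| / |∑ i, q i * x i (j i) - xbar|)) :=
    Finset.sum_congr rfl fun _ _ => mul_assoc _ _ _
  rw [hgoalsum]
  linarith [key, hsubf]
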